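/- For an irrational real number c > 0, the ℤ-saturated submonoid of ℝ₊ generated by c and ℕ equals {nc + m : n ∈ ℕ, m ∈ ℤ, nc + m ≥ 0}, and this monoid is not finitely generated. -/

import Mathlib

lemma step_lemma {d ε : ℝ} (hd0 : 0 < d) (hdε : d < ε) (hε1 : ε ≤ 1) :
    ∃ M : ℕ, 1 - ε < M * d ∧ (M : ℝ) * d < 1 := by
  refine ⟨⌊(1 - ε) / d⌋₊ + 1, ?_, ?_⟩
  · have h := Nat.lt_floor_add_one ((1 - ε) / d)
    have := (div_lt_iff₀ hd0).mp h
    push_cast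
    linarith
  · have hfl : (⌊(1 - ε) / d⌋₊ : ℝ) * d ≤ 1 - ε := by
      rcases le_or_gt (1 - ε) 0 with h | h
      · have h0 : ⌊(1 - ε) / d⌋₊ = 0 :=
          Nat.floor_of_nonpos (div_nonpos_of_nonpos_of_nonneg h hd0.le)
        simp [h0]; linarith
      · have hle : (⌊(1 - ε) / d⌋₊ : ℝ) ≤ (1 - ε) / d := Nat.floor_le (by positivity)
        calc (⌊(1 - ε) / d⌋₊ : ℝ) * d ≤ ((1 - ε) / d) * d := by nlinarith
          _ = 1 - ε := by field_simp
    push_cast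
    linarith

/-- small positive element of the monoid -/
lemma small_elt (c : ℝ) (hc : 0 < c) (hirr : Irrational c) {ε : ℝ} (hε : 0 < ε) :
    ∃ (n : ℕ) (m : ℤ), 0 < (n : ℝ) * c + m ∧ (n : ℝ) * c + m < ε := by
  wlog hε1 : ε ≤ 1 with H
  · obtain ⟨n, m, h1, h2⟩ := H c hc hirr (ε := 1) one_pos le_rfl
    exact ⟨n, m, h1, h2.trans_le (le_of_not_ge hε1)⟩
  obtain ⟨N, hN⟩ := exists_nat_gt (2 / ε)
  have h2ε : 0 < 2 / ε := by positivity
  have hN0 : 0 < N := by exact_mod_cast h2ε.trans hN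
  obtain ⟨j, k, hk0, hkN, hjk⟩ := Real.exists_int_int_abs_mul_sub_le c hN0
  have hsmall : |(k : ℝ) * c - j| < ε := by
    have h1 : (1 : ℝ) / (N + 1) < ε := by
      rw [div_lt_iff₀ (by positivity)]
      have hNr : 2 / ε < (N : ℝ) + 1 := by linarith
      have := (div_lt_iff₀ hε).mp hNr
      nlinarith
    linarith [hjk]
  have hδ0 : (k : ℝ) * c - j ≠ 0 := by
    intro h
    exact (hirr.intCast_mul (by exact_mod_cast hk0.ne')).ne_int j (by linarith)
  have hktoNatZ : ((k.toNat : ℕ) : ℤ) = k := Int.toNat_of_nonneg hk0.le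
  have hktoNat : ((k.toNat : ℕ) : ℝ) = (k : ℝ) := by exact_mod_cast hktoNatZ
  rcases lt_or_gt_of_ne hδ0 with hneg | hpos
  · -- kc - j < 0
    have hd0 : 0 < (j : ℝ) - k * c := by linarith
    have hdε : (j : ℝ) - k * c < ε := by
      have := abs_lt.mp hsmall; linarith [this.1]
    obtain ⟨M, hM1, hM2⟩ := step_lemma hd0 hdε hε1
    refine ⟨M * k.toNat, 1 - M * j, ?_, ?_⟩ <;>
    · have hcast : ((M * k.toNat : ℕ) : ℝ) * c + ((1 - M * j : ℤ) : ℝ)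
          = 1 - (M : ℝ) * ((j : ℝ) - k * c) := by
        push_cast; rw [hktoNat]; ring
      rw [hcast]
      linarith
  · refine ⟨k.toNat, -j, ?_, ?_⟩ <;>
    · have hcast : ((k.toNat : ℕ) : ℝ) * c + ((-j : ℤ) : ℝ) = (k : ℝ) * c - j := by
        push_cast; rw [hktoNat]; ring
      rw [hcast]
      have := abs_lt.mp hsmall
      first | exact hpos | linarith [this.2]

/-- A `ℤ`-saturated submonoid of `ℝ₊`: a set of nonnegative reals containing `0`,
closed under addition, and such that `x ≥ 0` with `x + m ∈ Λ` for some `m ∈ ℕ` implies `x ∈ Λ`. -/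
def IsZSatSubmonoid (Λ : Set ℝ) : Prop :=
  (∀ x ∈ Λ, 0 ≤ x) ∧ (0 : ℝ) ∈ Λ ∧ (∀ x ∈ Λ, ∀ y ∈ Λ, x + y ∈ Λ) ∧
    (∀ x : ℝ, 0 ≤ x → ∀ m : ℕ, x + (m : ℝ) ∈ Λ → x ∈ Λ)

/-- For an irrational `c > 0`, the `ℤ`-saturated submonoid of `ℝ₊` generated by `c` and `ℕ`
equals `{n•c + m : n ∈ ℕ, m ∈ ℤ, n•c + m ≥ 0}`, and this monoid is not finitely generated. -/
theorem stmt_1 (c : ℝ) (hc : 0 < c) (hirr : Irrational c) :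
    (⋂₀ {Λ : Set ℝ | IsZSatSubmonoid Λ ∧ c ∈ Λ ∧ ∀ n : ℕ, (n : ℝ) ∈ Λ}) =
      {x : ℝ | ∃ (n : ℕ) (m : ℤ), x = n * c + m ∧ 0 ≤ x} ∧
    ¬ ∃ F : Finset ℝ, (AddSubmonoid.closure (F : Set ℝ) : Set ℝ) =
      {x : ℝ | ∃ (n : ℕ) (m : ℤ), x = n * c + m ∧ 0 ≤ x} := by
  set S : Set ℝ := {x : ℝ | ∃ (n : ℕ) (m : ℤ), x = n * c + m ∧ 0 ≤ x} with hS
  have hcS : c ∈ S := ⟨1, 0, by push_cast; ring, hc.le⟩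
  have hSnn : ∀ x ∈ S, 0 ≤ x := by rintro x ⟨n, m, -, h⟩; exact h
  constructor
  · apply subset_antisymm
    · -- S itself is in the family
      apply Set.sInter_subset_of_mem
      refine ⟨⟨hSnn, ⟨0, 0, by norm_num, le_rfl⟩, ?_, ?_⟩, hcS, ?_⟩
      · rintro x ⟨n₁, m₁, rfl, hx⟩ y ⟨n₂, m₂, rfl, hy⟩
        exact ⟨n₁ + n₂, m₁ + m₂, by push_cast; ring, by linarith⟩
      · rintro x hx0 m' ⟨n, m, heq, -⟩
        exact ⟨n, m - m', by push_cast; linarith, hx0⟩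
      · intro n
        exact ⟨0, n, by push_cast; ring, n.cast_nonneg⟩
    · rintro x ⟨n, m, rfl, hx⟩
      rintro Λ ⟨⟨hpos, h0, hadd, hsat⟩, hcΛ, hnat⟩
      have hnc : ∀ k : ℕ, (k : ℝ) * c ∈ Λ := by
        intro k
        induction k with
        | zero => simpa using h0
        | succ k ih =>
          have := hadd _ ih _ hcΛ
          convert this using 1
          push_cast; ring
      rcases le_or_gt 0 m with hm | hm
      · have := hadd _ (hnc n) _ (hnat m.toNat)
        convert this using 2
        exact_mod_cast (Int.toNat_of_nonneg hm).symm
      · apply hsat _ hx (-m).toNat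
        have hcast : ((-m).toNat : ℝ) = -(m : ℝ) := by
          exact_mod_cast Int.toNat_of_nonneg (by omega : (0:ℤ) ≤ -m)
        rw [hcast]
        convert hnc n using 1
        ring
  · rintro ⟨F, hF⟩
    -- F has a positive element
    have hFS : ∀ f ∈ F, f ∈ S := fun f hf => hF ▸ AddSubmonoid.subset_closure hf
    have hcF : c ∈ (AddSubmonoid.closure (F : Set ℝ) : Set ℝ) := hF ▸ hcS
    set P := F.filter (fun f => 0 < f) with hP
    have hPne : P.Nonempty := by
      by_contra hne
      rw [Finset.not_nonempty_iff_eq_empty, Finset.filter_eq_empty_iff] at hne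
      have hzero : ∀ f ∈ F, f = 0 := fun f hf =>
        le_antisymm (le_of_not_gt (hne hf)) (hSnn f (hFS f hf))
      have : c = 0 := by
        refine AddSubmonoid.closure_induction (fun x hx => hzero x hx) rfl ?_ hcF
        rintro x y - - rfl rfl; ring
      exact hc.ne' this
    set ε := P.min' hPne with hε
    have hε0 : 0 < ε :=
      (Finset.mem_filter.mp (P.min'_mem hPne)).2
    obtain ⟨n, m, hx0, hxε⟩ := small_elt c hc hirr hε0
    have hxS : ((n : ℝ) * c + m) ∈ S := ⟨n, m, rfl, hx0.le⟩
    have hxcl : ((n : ℝ) * c + m) ∈ (AddSubmonoid.closure (F : Set ℝ) : Set ℝ) := hF ▸ hxS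
    have key : ∀ y ∈ (AddSubmonoid.closure (F : Set ℝ) : Set ℝ), y = 0 ∨ ε ≤ y := by
      intro y hy
      refine AddSubmonoid.closure_induction ?_ (Or.inl rfl) ?_ hy
      · intro f hf
        rcases eq_or_ne f 0 with h | h
        · exact Or.inl h
        · right
          apply P.min'_le
          rw [hP, Finset.mem_filter]
          exact ⟨hf, lt_of_le_of_ne (hSnn f (hFS f hf)) (Ne.symm h)⟩
      · rintro x y - - hx hy
        rcases hx with rfl | hx
        · simpa using hy
        · right
          have hy0 : 0 ≤ y := by
            rcases hy with rfl | h
            · exact le_rfl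
            · linarith
          linarith
    rcases key _ hxcl with h | h
    · linarith
    · linarith
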